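/- (Trace criterion) Let ρ be a separable state on ℂ⁴ ⊗ ℂ⁴ with correlation coefficients t_{kk} = Tr(ρ (A_k ⊗ B_k)), where {A_k}_{k=1}^{16} and {B_k}_{k=1}^{16} are each orthonormal Hermitian operator bases of 4×4 matrices. Then S(ρ) = Σ_{k=1}^{16} |t_{kk}| ≤ 1. -/

import Mathlib

open Matrix Kronecker ComplexOrder

-- trace of product of two Hermitian matrices is real
lemma trace_herm_real {n : Type*} [Fintype n] {X A : Matrix n n ℂ}
    (hX : X.IsHermitian) (hA : A.IsHermitian) :
    ((X * A).trace : ℂ) = (((X * A).trace.re : ℝ) : ℂ) := by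
  have h : star ((X * A).trace) = (X * A).trace := by
    rw [← Matrix.trace_conjTranspose, Matrix.conjTranspose_mul, hX.eq, hA.eq,
      Matrix.trace_mul_comm]
  exact ((Complex.conj_eq_iff_re).mp h).symm

-- trace of M * Mᴴ is nonneg (complex order)
lemma trace_mul_conjTranspose_nonneg {n : Type*} [Fintype n] (M : Matrix n n ℂ) :
    0 ≤ (M * Mᴴ).trace := by
  have : (M * Mᴴ).trace = ∑ i, ∑ j, (Complex.normSq (M i j) : ℂ) := by
    simp only [Matrix.trace, Matrix.diag, Matrix.mul_apply, Matrix.conjTranspose_apply,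
      ← Complex.mul_conj]
    rfl
  rw [this]
  refine Finset.sum_nonneg fun i _ => Finset.sum_nonneg fun j _ => ?_
  rw [← Complex.ofReal_zero, Complex.real_le_real]
  exact Complex.normSq_nonneg _

lemma trace_sq_le_one {X : Matrix (Fin 4) (Fin 4) ℂ} (hX : X.PosSemidef)
    (hTr : X.trace = 1) : (X * X).trace ≤ 1 := by
  have hH := hX.1
  have hspec := hH.spectral_theorem
  set U : Matrix (Fin 4) (Fin 4) ℂ := (Matrix.IsHermitian.eigenvectorUnitary hH : Matrix (Fin 4) (Fin 4) ℂ) with hUdef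
  set D : Matrix (Fin 4) (Fin 4) ℂ := Matrix.diagonal (RCLike.ofReal ∘ hH.eigenvalues) with hDdef
  replace hspec : X = U * D * star U := hspec
  have hU : star U * U = 1 := (Matrix.mem_unitaryGroup_iff').mp (Matrix.IsHermitian.eigenvectorUnitary hH).2
  have htraceD : ∀ M : Matrix (Fin 4) (Fin 4) ℂ, (U * M * star U).trace = M.trace := by
    intro M
    rw [Matrix.trace_mul_cycle, hU, Matrix.one_mul]
  have hX2 : (X * X).trace = ∑ i, ((hH.eigenvalues i : ℂ)) ^ 2 := by
    have : X * X = U * (D * D) * star U := by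
      rw [hspec]
      rw [show U * D * star U * (U * D * star U) = U * (D * (star U * U) * D) * star U by
        simp only [Matrix.mul_assoc]]
      rw [hU, Matrix.mul_one]
    rw [this, htraceD, hDdef, Matrix.diagonal_mul_diagonal, Matrix.trace_diagonal]
    simp [sq]
  have hX1 : ∑ i, hH.eigenvalues i = 1 := by
    have : X.trace = ∑ i, (hH.eigenvalues i : ℂ) := by
      conv_lhs => rw [hspec]
      rw [htraceD, hDdef, Matrix.trace_diagonal]
      rfl
    rw [hTr] at this
    have := this.symm
    rw [show ∑ i, ((hH.eigenvalues i : ℝ) : ℂ) = ((∑ i, hH.eigenvalues i : ℝ) : ℂ) by push_cast; ring] at this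
    exact_mod_cast this
  have hnn : ∀ i, 0 ≤ hH.eigenvalues i := hX.eigenvalues_nonneg
  have hle : ∑ i, (hH.eigenvalues i) ^ 2 ≤ 1 := by
    calc ∑ i, (hH.eigenvalues i) ^ 2 ≤ ∑ i, hH.eigenvalues i := by
          refine Finset.sum_le_sum fun i _ => ?_
          have h1 : hH.eigenvalues i ≤ 1 := by
            rw [← hX1]
            exact Finset.single_le_sum (fun j _ => hnn j) (Finset.mem_univ i)
          nlinarith [hnn i]
      _ = 1 := hX1
  rw [hX2]
  calc ∑ i, ((hH.eigenvalues i : ℂ)) ^ 2 = ((∑ i, (hH.eigenvalues i) ^ 2 : ℝ) : ℂ) := by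
        push_cast; ring
    _ ≤ ((1 : ℝ) : ℂ) := Complex.real_le_real.mpr hle
    _ = 1 := by norm_num

-- Bessel-type inequality
lemma bessel_key {X : Matrix (Fin 4) (Fin 4) ℂ} (hX : X.PosSemidef) (hTr : X.trace = 1)
    (A : Fin 16 → Matrix (Fin 4) (Fin 4) ℂ) (hAH : ∀ k, (A k).IsHermitian)
    (hAOn : ∀ k l, (A k * A l).trace = if k = l then 1 else 0) :
    ∑ k, ((X * A k).trace.re) ^ 2 ≤ 1 := by
  set c : Fin 16 → ℝ := fun k => (X * A k).trace.re with hc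
  have hcx : ∀ k, (X * A k).trace = (c k : ℂ) := fun k => trace_herm_real hX.1 (hAH k)
  set S : Matrix (Fin 4) (Fin 4) ℂ := ∑ k, (c k : ℂ) • A k with hS
  set Y : Matrix (Fin 4) (Fin 4) ℂ := X - S with hY
  have hYH : Yᴴ = Y := by
    rw [hY, Matrix.conjTranspose_sub, hX.1.eq, hS]
    congr 1
    rw [Matrix.conjTranspose_sum]
    refine Finset.sum_congr rfl fun k _ => ?_
    rw [Matrix.conjTranspose_smul, (hAH k).eq]
    simp
  have h0 : 0 ≤ (Y * Y).trace := by
    have := trace_mul_conjTranspose_nonneg Y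
    rwa [hYH] at this
  have hXS : (X * S).trace = ((∑ k, (c k)^2 : ℝ) : ℂ) := by
    rw [hS, Finset.mul_sum, Matrix.trace_sum]
    push_cast
    refine Finset.sum_congr rfl fun k _ => ?_
    rw [Matrix.mul_smul, Matrix.trace_smul, hcx k]
    simp [sq]
  have hSX : (S * X).trace = ((∑ k, (c k)^2 : ℝ) : ℂ) := by
    rw [Matrix.trace_mul_comm]; exact hXS
  have hSS : (S * S).trace = ((∑ k, (c k)^2 : ℝ) : ℂ) := by
    rw [hS, Finset.sum_mul, Matrix.trace_sum]
    push_cast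
    refine Finset.sum_congr rfl fun k _ => ?_
    rw [Matrix.smul_mul, Finset.mul_sum, Finset.smul_sum, Matrix.trace_sum]
    rw [Finset.sum_eq_single k]
    · simp [Matrix.mul_smul, Matrix.trace_smul, hAOn k k, sq, smul_eq_mul]
    · intro l _ hl
      simp [Matrix.mul_smul, Matrix.trace_smul, hAOn k l, (Ne.symm hl : ¬ k = l), smul_eq_mul]
    · intro h; exact absurd (Finset.mem_univ k) h
  have hexp : (Y * Y).trace = (X * X).trace - ((∑ k, (c k)^2 : ℝ) : ℂ) := by
    rw [hY, Matrix.sub_mul, Matrix.mul_sub, Matrix.mul_sub, Matrix.trace_sub, Matrix.trace_sub,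
      Matrix.trace_sub, hXS, hSX, hSS]
    ring
  have h1 : ((∑ k, (c k)^2 : ℝ) : ℂ) ≤ (X * X).trace := by
    rw [hexp] at h0
    exact sub_nonneg.mp h0
  have h2 := h1.trans (trace_sq_le_one hX hTr)
  rw [show (1 : ℂ) = ((1:ℝ) : ℂ) by norm_num] at h2
  exact Complex.real_le_real.mp h2

/-- Trace criterion: for a separable state `ρ` on `ℂ⁴ ⊗ ℂ⁴` and orthonormal Hermitian
operator bases `{A_k}`, `{B_k}` of the 4×4 matrices, the diagonal correlation
coefficients `t_{kk} = Tr(ρ (A_k ⊗ B_k))` satisfy `S(ρ) = Σ_k |t_{kk}| ≤ 1`. -/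
theorem trace_criterion_separable (ι : Type) [Fintype ι]
    (p : ι → ℝ) (hp : ∀ i, 0 ≤ p i) (hps : ∑ i, p i = 1)
    (ρA ρB : ι → Matrix (Fin 4) (Fin 4) ℂ)
    (hρA : ∀ i, (ρA i).PosSemidef ∧ (ρA i).trace = 1)
    (hρB : ∀ i, (ρB i).PosSemidef ∧ (ρB i).trace = 1)
    (ρ : Matrix (Fin 4 × Fin 4) (Fin 4 × Fin 4) ℂ)
    (hρ : ρ = ∑ i, (p i : ℂ) • (ρA i ⊗ₖ ρB i))
    (Ab Bb : Fin 16 → Matrix (Fin 4) (Fin 4) ℂ)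
    (hAbHerm : ∀ k, (Ab k).IsHermitian) (hBbHerm : ∀ k, (Bb k).IsHermitian)
    (hAbOn : ∀ k l, (Ab k * Ab l).trace = if k = l then 1 else 0)
    (hBbOn : ∀ k l, (Bb k * Bb l).trace = if k = l then 1 else 0) :
    ∑ k : Fin 16, ‖(ρ * (Ab k ⊗ₖ Bb k)).trace‖ ≤ 1 := by
  set a : ι → Fin 16 → ℝ := fun i k => ((ρA i * Ab k).trace).re with ha
  set b : ι → Fin 16 → ℝ := fun i k => ((ρB i * Bb k).trace).re with hb
  have htk : ∀ k, (ρ * (Ab k ⊗ₖ Bb k)).trace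
      = ∑ i, (p i : ℂ) * ((a i k : ℂ) * (b i k : ℂ)) := by
    intro k
    rw [hρ, Finset.sum_mul, Matrix.trace_sum]
    refine Finset.sum_congr rfl fun i _ => ?_
    rw [Matrix.smul_mul, Matrix.trace_smul, ← Matrix.mul_kronecker_mul, Matrix.trace_kronecker,
      ← trace_herm_real (hρA i).1.1 (hAbHerm k), ← trace_herm_real (hρB i).1.1 (hBbHerm k)]
    rfl
  have hbound : ∀ k, ‖(ρ * (Ab k ⊗ₖ Bb k)).trace‖
      ≤ ∑ i, p i * (|a i k| * |b i k|) := by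
    intro k
    rw [htk k]
    refine le_trans (norm_sum_le _ _) ?_
    refine Finset.sum_le_sum fun i _ => ?_
    rw [norm_mul, norm_mul]
    simp only [Complex.norm_real, Real.norm_eq_abs]
    rw [abs_of_nonneg (hp i)]
  calc ∑ k : Fin 16, ‖(ρ * (Ab k ⊗ₖ Bb k)).trace‖
      ≤ ∑ k : Fin 16, ∑ i, p i * (|a i k| * |b i k|) :=
        Finset.sum_le_sum fun k _ => hbound k
    _ = ∑ i, p i * ∑ k : Fin 16, |a i k| * |b i k| := by
        rw [Finset.sum_comm]
        simp [Finset.mul_sum]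
    _ ≤ ∑ i, p i * 1 := by
        refine Finset.sum_le_sum fun i _ => ?_
        refine mul_le_mul_of_nonneg_left ?_ (hp i)
        have hA2 : ∑ k, (a i k) ^ 2 ≤ 1 := bessel_key (hρA i).1 (hρA i).2 Ab hAbHerm hAbOn
        have hB2 : ∑ k, (b i k) ^ 2 ≤ 1 := bessel_key (hρB i).1 (hρB i).2 Bb hBbHerm hBbOn
        calc ∑ k : Fin 16, |a i k| * |b i k|
            ≤ ∑ k : Fin 16, ((a i k)^2 + (b i k)^2) / 2 := by
              refine Finset.sum_le_sum fun k _ => ?_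
              nlinarith [sq_nonneg (|a i k| - |b i k|), sq_abs (a i k), sq_abs (b i k)]
          _ = ((∑ k, (a i k)^2) + ∑ k, (b i k)^2) / 2 := by
              rw [← Finset.sum_add_distrib, ← Finset.sum_div]
          _ ≤ 1 := by linarith
    _ = 1 := by simp [hps]
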